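/- Let ξ ∈ ℝ, α ∈ ℝ, and c > 0 with 6|α|c < 1, and define G: ℝ → ℝ by G(x) = x + α(x−ξ)|x−ξ| φ((x−ξ)/c). Then G is Lipschitz continuous with Lipschitz constant 1 + 6|α|c, and the inverse function G⁻¹: ℝ → ℝ is Lipschitz continuous with Lipschitz constant (1 − 6|α|c)⁻¹. -/

import Mathlib

/-- The bump function `φ(u) = (1+u)³(1-u)³` for `|u| ≤ 1` and `φ(u) = 0` otherwise. -/
noncomputable def phi (u : ℝ) : ℝ := if |u| ≤ 1 then (1 + u) ^ 3 * (1 - u) ^ 3 else 0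

/-- The transform `G(x) = x + α(x-ξ)|x-ξ| φ((x-ξ)/c)`. -/
noncomputable def transformG (ξ α c : ℝ) (x : ℝ) : ℝ :=
  x + α * ((x - ξ) * |x - ξ| * phi ((x - ξ) / c))

open Filter Topology

lemma hasDerivAt_maxpow (n : ℕ) (hn : 2 ≤ n) (s : ℝ) :
    HasDerivAt (fun t : ℝ => (max 0 t) ^ n) ((n : ℝ) * (max 0 s) ^ (n - 1)) s := by
  rcases lt_trichotomy s 0 with hs | hs | hs
  · have hmax : max (0:ℝ) s = 0 := max_eq_left hs.le
    have heq : (fun t : ℝ => (max 0 t) ^ n) =ᶠ[𝓝 s] fun _ => (0:ℝ) := by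
      filter_upwards [Iio_mem_nhds hs] with t ht
      simp [max_eq_left (le_of_lt (Set.mem_Iio.1 ht)), zero_pow (by omega : n ≠ 0)]
    have : HasDerivAt (fun _ : ℝ => (0:ℝ)) 0 s := hasDerivAt_const s 0
    have h2 := this.congr_of_eventuallyEq heq
    rw [hmax, zero_pow (by omega : n - 1 ≠ 0), mul_zero]; exact h2
  · subst hs
    rw [hasDerivAt_iff_tendsto_slope]
    have hmax : max (0:ℝ) 0 = 0 := max_self 0
    rw [hmax, zero_pow (by omega : n - 1 ≠ 0), mul_zero]
    apply squeeze_zero_norm' (a := fun t : ℝ => |t|)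
    · have h1 : ∀ᶠ t in 𝓝[≠] (0:ℝ), |t| ≤ 1 ∧ t ≠ 0 := by
        have hb : ∀ᶠ t in 𝓝 (0:ℝ), |t| ≤ 1 := by
          have := Metric.closedBall_mem_nhds (0:ℝ) one_pos
          filter_upwards [this] with t ht
          simpa [Real.dist_eq] using ht
        filter_upwards [nhdsWithin_le_nhds hb, self_mem_nhdsWithin] with t h1 h2
        exact ⟨h1, h2⟩
      filter_upwards [h1] with t ⟨ht1, ht0⟩
      have : slope (fun t : ℝ => (max 0 t) ^ n) 0 t = (max 0 t) ^ n / t := by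
        simp [slope_def_field, zero_pow (by omega : n ≠ 0)]
      rw [this, norm_div]
      have hmt : |(max 0 t) ^ n| ≤ |t| ^ 2 := by
        rw [abs_pow]
        have h2 : |max 0 t| ≤ |t| := by
          rcases le_total t 0 with h | h
          · simp [max_eq_left h]
          · simp [max_eq_right h, abs_of_nonneg h]
        calc |max 0 t| ^ n ≤ |t| ^ n := pow_le_pow_left₀ (abs_nonneg _) h2 n
          _ ≤ |t| ^ 2 := pow_le_pow_of_le_one (abs_nonneg _) ht1 hn
      have ht0' : (0:ℝ) < |t| := abs_pos.2 ht0
      calc ‖(max 0 t)^n‖ / ‖t‖ = |(max 0 t)^n| / |t| := rfl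
        _ ≤ |t|^2 / |t| := by gcongr
        _ = |t| := by field_simp
    · exact (continuous_abs.tendsto' (0:ℝ) 0 (by simp)).mono_left nhdsWithin_le_nhds
  · have heq : (fun t : ℝ => (max 0 t) ^ n) =ᶠ[𝓝 s] fun t => t ^ n := by
      filter_upwards [Ioi_mem_nhds hs] with t ht
      rw [max_eq_right (le_of_lt (Set.mem_Ioi.1 ht))]
    have h2 := (hasDerivAt_pow n s).congr_of_eventuallyEq heq
    rw [max_eq_right hs.le]; exact h2

lemma hasDerivAt_mul_abs (u : ℝ) : HasDerivAt (fun u : ℝ => u * |u|) (2 * |u|) u := by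
  have hid : (fun u : ℝ => u * |u|) = fun u : ℝ => (max 0 u) ^ 2 - (max 0 (-u)) ^ 2 := by
    funext v
    rcases le_total 0 v with h | h
    · rw [max_eq_right h, max_eq_left (neg_nonpos.2 h), abs_of_nonneg h]; ring
    · rw [max_eq_left h, max_eq_right (neg_nonneg.2 h), abs_of_nonpos h]; ring
  rw [hid]
  have h1 := hasDerivAt_maxpow 2 le_rfl u
  have h2 := (hasDerivAt_maxpow 2 le_rfl (-u)).comp u (hasDerivAt_neg u)
  have h3 := h1.sub h2
  refine h3.congr_deriv ?_
  rcases le_total 0 u with h | h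
  · rw [max_eq_right h, max_eq_left (neg_nonpos.2 h), abs_of_nonneg h]; norm_num
  · rw [max_eq_left h, max_eq_right (neg_nonneg.2 h), abs_of_nonpos h]; norm_num

lemma phi_eq (t : ℝ) : phi t = (max 0 (1 - t ^ 2)) ^ 3 := by
  unfold phi
  rcases le_or_gt |t| 1 with h | h
  · have h2 : t ^ 2 ≤ 1 := by nlinarith [sq_abs t, abs_nonneg t]
    rw [if_pos h, max_eq_right (by linarith)]; ring
  · have h2 : 1 < t ^ 2 := by nlinarith [sq_abs t, abs_nonneg t]
    rw [if_neg (not_le.2 h), max_eq_left (by linarith)]; ring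

lemma hasDerivAt_transF (c : ℝ) (hc : 0 < c) (u : ℝ) :
    HasDerivAt (fun u : ℝ => u * |u| * (max 0 (1 - (u/c)^2))^3)
      (2 * |u| * (max 0 (1-(u/c)^2))^3
        + u * |u| * (3 * (max 0 (1-(u/c)^2))^2 * (-(2*u/c^2)))) u := by
  have hin : HasDerivAt (fun u : ℝ => 1 - (u/c)^2) (-(2*u/c^2)) u := by
    have h1 := ((hasDerivAt_id u).div_const c).pow 2
    have h2 := h1.const_sub 1
    refine h2.congr_deriv ?_
    simp only [id_eq]
    norm_num
    field_simp
  have hout := hasDerivAt_maxpow 3 (by norm_num) (1 - (u/c)^2)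
  have hcomp := HasDerivAt.comp u hout hin
  have hmul := (hasDerivAt_mul_abs u).mul hcomp
  refine hmul.congr_deriv ?_
  norm_num [Function.comp_apply]

lemma transF_deriv_bound (c : ℝ) (hc : 0 < c) (u : ℝ) :
    |2 * |u| * (max 0 (1-(u/c)^2))^3
      + u * |u| * (3 * (max 0 (1-(u/c)^2))^2 * (-(2*u/c^2)))| ≤ 6 * c := by
  rcases le_or_gt (1 - (u/c)^2) 0 with hM | hM
  · rw [max_eq_left hM]
    norm_num
    positivity
  · rw [max_eq_right hM.le]
    set M := 1 - (u/c)^2 with hMdef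
    clear_value M
    have hM1 : M ≤ 1 := by
      have : 0 ≤ (u/c)^2 := sq_nonneg _
      simp only [hMdef]; linarith
    have hu2 : u^2 < c^2 := by
      have h1 : (u/c)^2 < 1 := by linarith
      rw [div_pow] at h1
      have h2 : 0 < c^2 := by positivity
      exact (div_lt_one h2).mp h1
    have ha : |u| ≤ c := by nlinarith [sq_abs u, abs_nonneg u]
    have hEe : u * |u| * (3*M^2*(-(2*u/c^2))) = -(6 * |u| ^ 3*M^2/c^2) := by
      field_simp
      linear_combination (6 * |u|) * (sq_abs u)
    rw [hEe]
    have hM2 : M^2 ≤ 1 := by nlinarith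
    have hM3 : M^3 ≤ 1 := by nlinarith
    have hD : 6 * |u| ^ 3*M^2/c^2 ≤ 6*c := by
      rw [div_le_iff₀ (by positivity)]
      have hu3 : |u| ^ 3 ≤ c^3 := pow_le_pow_left₀ (abs_nonneg u) ha 3
      nlinarith [abs_nonneg u, pow_nonneg (abs_nonneg u) 3, sq_nonneg M, hc.le]
    have hD0 : 0 ≤ 6 * |u| ^ 3*M^2/c^2 := by positivity
    have hT : 2 * |u| * M^3 ≤ 6*c := by nlinarith [abs_nonneg u]
    have hT0 : 0 ≤ 2 * |u| * M^3 := by positivity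
    rw [abs_le]
    constructor <;> linarith

lemma transF_lip (c : ℝ) (hc : 0 < c) (x y : ℝ) :
    |x * |x| * (max 0 (1-(x/c)^2))^3 - y * |y| * (max 0 (1-(y/c)^2))^3| ≤ 6*c*|x-y| := by
  have main : ∀ a b : ℝ, a < b →
      |a * |a| * (max 0 (1-(a/c)^2))^3 - b * |b| * (max 0 (1-(b/c)^2))^3| ≤ 6*c*|a-b| := by
    intro a b hab
    set f := fun u : ℝ => u * |u| * (max 0 (1 - (u/c)^2))^3 with hf
    set f' := fun u : ℝ => 2 * |u| * (max 0 (1-(u/c)^2))^3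
        + u * |u| * (3 * (max 0 (1-(u/c)^2))^2 * (-(2*u/c^2))) with hf'
    have hcont : ContinuousOn f (Set.Icc a b) :=
      fun z _ => ((hasDerivAt_transF c hc z).continuousAt).continuousWithinAt
    have hderiv : ∀ z ∈ Set.Ioo a b, HasDerivAt f (f' z) z :=
      fun z _ => hasDerivAt_transF c hc z
    obtain ⟨z, _, hz⟩ := exists_hasDerivAt_eq_slope f f' hab hcont hderiv
    have hba : b - a ≠ 0 := by linarith
    have heq : f b - f a = f' z * (b - a) := by
      field_simp at hz
      linarith [hz]
    have hbd := transF_deriv_bound c hc z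
    have : |f a - f b| = |f' z| * (b - a) := by
      rw [abs_sub_comm, heq, abs_mul, abs_of_pos (by linarith : (0:ℝ) < b - a)]
    rw [show |a - b| = b - a by rw [abs_sub_comm]; exact abs_of_pos (by linarith)]
    calc |f a - f b| = |f' z| * (b - a) := this
      _ ≤ 6*c*(b-a) := by
        apply mul_le_mul_of_nonneg_right _ (by linarith)
        exact hbd
  rcases lt_trichotomy x y with h | h | h
  · exact main x y h
  · subst h; simp
  · have := main y x h
    rw [abs_sub_comm, show |x - y| = |y - x| from abs_sub_comm x y]
    exact this

lemma transF_abs_le (c : ℝ) (hc : 0 < c) (u : ℝ) :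
    |u * |u| * (max 0 (1-(u/c)^2))^3| ≤ c^2 := by
  rcases le_or_gt (1 - (u/c)^2) 0 with hM | hM
  · rw [max_eq_left hM]
    norm_num
    positivity
  · rw [max_eq_right hM.le]
    set M := 1 - (u/c)^2 with hMdef
    clear_value M
    have hM1 : M ≤ 1 := by
      have : 0 ≤ (u/c)^2 := sq_nonneg _
      linarith
    have hu2 : u^2 < c^2 := by
      have h1 : (u/c)^2 < 1 := by linarith
      rw [div_pow] at h1
      have h2 : 0 < c^2 := by positivity
      exact (div_lt_one h2).mp h1
    have ha : |u| ≤ c := by nlinarith [sq_abs u, abs_nonneg u]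
    have hM2 : M^2 ≤ 1 := by nlinarith
    have hM3 : M^3 ≤ 1 := by nlinarith
    rw [abs_mul, abs_mul, abs_abs, abs_of_nonneg (by positivity : (0:ℝ) ≤ M^3)]
    nlinarith [abs_nonneg u, pow_nonneg hM.le 3]

/-- if `6|α|c < 1` then `G` is Lipschitz with constant `1 + 6|α|c`
and `G⁻¹` is Lipschitz with constant `(1 - 6|α|c)⁻¹`. -/
theorem transformG_lipschitz (ξ α c : ℝ) (hc : 0 < c) (h : 6 * |α| * c < 1) :
    (∀ x y : ℝ, |transformG ξ α c x - transformG ξ α c y| ≤ (1 + 6 * |α| * c) * |x - y|) ∧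
    (∀ x y : ℝ, |Function.invFun (transformG ξ α c) x - Function.invFun (transformG ξ α c) y|
      ≤ (1 - 6 * |α| * c)⁻¹ * |x - y|) := by
  set F := fun u : ℝ => u * |u| * (max 0 (1 - (u/c)^2))^3 with hF
  have hGF : ∀ x : ℝ, transformG ξ α c x = x + α * F (x - ξ) := by
    intro x
    unfold transformG
    rw [phi_eq, hF]
  have hFlip : ∀ x y : ℝ, |F x - F y| ≤ 6 * c * |x - y| := fun x y => transF_lip c hc x y
  -- forward Lipschitz
  have part1 : ∀ x y : ℝ, |transformG ξ α c x - transformG ξ α c y|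
      ≤ (1 + 6 * |α| * c) * |x - y| := by
    intro x y
    rw [hGF x, hGF y]
    have h1 : x + α * F (x - ξ) - (y + α * F (y - ξ))
        = (x - y) + α * (F (x - ξ) - F (y - ξ)) := by ring
    rw [h1]
    have h2 := hFlip (x - ξ) (y - ξ)
    have h3 : (x - ξ) - (y - ξ) = x - y := by ring
    rw [h3] at h2
    calc |(x - y) + α * (F (x - ξ) - F (y - ξ))|
        ≤ |x - y| + |α * (F (x - ξ) - F (y - ξ))| := abs_add_le _ _
      _ = |x - y| + |α| * |F (x - ξ) - F (y - ξ)| := by rw [abs_mul]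
      _ ≤ |x - y| + |α| * (6 * c * |x - y|) := by
          gcongr
      _ = (1 + 6 * |α| * c) * |x - y| := by ring
  refine ⟨part1, ?_⟩
  -- reverse inequality
  have hrev : ∀ x y : ℝ, (1 - 6 * |α| * c) * |x - y|
      ≤ |transformG ξ α c x - transformG ξ α c y| := by
    intro x y
    have h2 := hFlip (x - ξ) (y - ξ)
    have h3 : (x - ξ) - (y - ξ) = x - y := by ring
    rw [h3] at h2
    have h4 : (x - y) = (transformG ξ α c x - transformG ξ α c y)
        - α * (F (x - ξ) - F (y - ξ)) := by
      rw [hGF x, hGF y]; ring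
    have h5 : |x - y| ≤ |transformG ξ α c x - transformG ξ α c y|
        + |α| * (6 * c * |x - y|) := by
      calc |x - y| = |(transformG ξ α c x - transformG ξ α c y)
            - α * (F (x - ξ) - F (y - ξ))| := by rw [← h4]
        _ ≤ |transformG ξ α c x - transformG ξ α c y|
            + |α * (F (x - ξ) - F (y - ξ))| := abs_sub _ _
        _ ≤ |transformG ξ α c x - transformG ξ α c y|
            + |α| * (6 * c * |x - y|) := by rw [abs_mul]; gcongr
    nlinarith [abs_nonneg (x - y)]
  -- surjectivity
  have hcont : Continuous (transformG ξ α c) := by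
    have : transformG ξ α c = fun x => x + α * F (x - ξ) := funext hGF
    rw [this, hF]
    fun_prop
  have hbound : ∀ x : ℝ, |α * F (x - ξ)| ≤ |α| * c^2 := by
    intro x
    rw [abs_mul]
    have := transF_abs_le c hc (x - ξ)
    exact mul_le_mul_of_nonneg_left this (abs_nonneg α)
  have htop : Filter.Tendsto (transformG ξ α c) Filter.atTop Filter.atTop := by
    apply Filter.tendsto_atTop_mono (f := fun x : ℝ => x + (-(|α| * c^2)))
    · intro x
      rw [hGF x]
      have := hbound x
      have h6 := neg_abs_le (α * F (x - ξ))
      linarith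
    · exact Filter.tendsto_atTop_add_const_right _ _ Filter.tendsto_id
  have hbot : Filter.Tendsto (transformG ξ α c) Filter.atBot Filter.atBot := by
    apply Filter.tendsto_atBot_mono (f := fun x : ℝ => x + |α| * c^2)
    · intro x
      rw [hGF x]
      have := hbound x
      have h6 := le_abs_self (α * F (x - ξ))
      linarith
    · exact Filter.tendsto_atBot_add_const_right _ _ Filter.tendsto_id
  have hsurj : Function.Surjective (transformG ξ α c) := hcont.surjective htop hbot
  intro a b
  have hga : transformG ξ α c (Function.invFun (transformG ξ α c) a) = a :=
    Function.invFun_eq (hsurj a)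
  have hgb : transformG ξ α c (Function.invFun (transformG ξ α c) b) = b :=
    Function.invFun_eq (hsurj b)
  have hkey := hrev (Function.invFun (transformG ξ α c) a)
    (Function.invFun (transformG ξ α c) b)
  rw [hga, hgb] at hkey
  have hpos : 0 < 1 - 6 * |α| * c := by linarith
  rw [inv_mul_eq_div, le_div_iff₀ hpos]
  nlinarith [hkey]
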